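/- For all integers m ≥ 3 and ℓ ≥ 1, one has C(m+ℓ, ℓ+1)·(m+ℓ) > m·(m+ℓ) + (2m+ℓ−2)·(C(m+ℓ−1, ℓ) − 1). -/

import Mathlib

/-- Lower bound `n + 1 ≤ C(n, k) + k` for `1 ≤ k ≤ n`. -/
lemma choose_lower (n k : ℕ) (h1 : 1 ≤ k) (h : k ≤ n) :
    n + 1 ≤ Nat.choose n k + k := by
  induction n with
  | zero => omega
  | succ n ih =>
    rcases Nat.eq_or_lt_of_le h with rfl | h'
    · simp [Nat.choose_self]
    · have hk : k ≤ n := Nat.lt_succ_iff.mp h'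
      have h2 := ih hk
      obtain ⟨j, rfl⟩ : ∃ j, k = j + 1 := ⟨k - 1, by omega⟩
      have h3 : Nat.choose (n + 1) (j + 1)
          = Nat.choose n j + Nat.choose n (j + 1) := Nat.choose_succ_succ n j
      have h4 : 0 < Nat.choose n j := Nat.choose_pos (by omega)
      omega

/-- `a·ℓ + 1 ≤ C(a+ℓ, ℓ)` for `a ≥ 2`, `ℓ ≥ 1`. -/
lemma choose_lin_lower (a ℓ : ℕ) (ha : 2 ≤ a) (hℓ : 1 ≤ ℓ) :
    a * ℓ + 1 ≤ Nat.choose (a + ℓ) ℓ := by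
  induction ℓ with
  | zero => omega
  | succ ℓ ih =>
    rcases Nat.eq_zero_or_pos ℓ with rfl | hpos
    · simp [Nat.choose_one_right]
    · have h1 := ih hpos
      have h2 : a + ℓ + 1 ≤ Nat.choose (a + ℓ) (ℓ + 1) + (ℓ + 1) :=
        choose_lower (a + ℓ) (ℓ + 1) (by omega) (by omega)
      have hrw : a + (ℓ + 1) = a + ℓ + 1 := by omega
      rw [hrw]
      have h3 : Nat.choose (a + ℓ + 1) (ℓ + 1)
          = Nat.choose (a + ℓ) ℓ + Nat.choose (a + ℓ) (ℓ + 1) :=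
        Nat.choose_succ_succ (a + ℓ) ℓ
      have h5 : a * (ℓ + 1) = a * ℓ + a := by ring
      omega

/-- **Arithmetic core of Theorem 3.2.** For all integers `m ≥ 3` and `ℓ ≥ 1`,
`C(m+ℓ, ℓ+1)·(m+ℓ) > m·(m+ℓ) + (2m+ℓ−2)·(C(m+ℓ−1, ℓ) − 1)`. -/
theorem stmt_1 (m ℓ : ℕ) (hm : 3 ≤ m) (hℓ : 1 ≤ ℓ) :
    (Nat.choose (m + ℓ) (ℓ + 1) : ℤ) * ((m : ℤ) + (ℓ : ℤ)) >
      (m : ℤ) * ((m : ℤ) + (ℓ : ℤ)) +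
        (2 * (m : ℤ) + (ℓ : ℤ) - 2) * ((Nat.choose (m + ℓ - 1) ℓ : ℤ) - 1) := by
  obtain ⟨x, rfl⟩ : ∃ x, m = x + 3 := ⟨m - 3, by omega⟩
  obtain ⟨y, rfl⟩ : ∃ y, ℓ = y + 1 := ⟨ℓ - 1, by omega⟩
  rw [show x + 3 + (y + 1) - 1 = x + y + 3 from by omega,
      show x + 3 + (y + 1) = x + y + 4 from by omega,
      show y + 1 + 1 = y + 2 from by omega]
  have hid : (x + y + 4) * Nat.choose (x + y + 3) (y + 1)
      = Nat.choose (x + y + 4) (y + 2) * (y + 2) := by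
    have := Nat.add_one_mul_choose_eq (x + y + 3) (y + 1)
    simpa [Nat.succ_eq_add_one, show x + y + 3 + 1 = x + y + 4 from by omega,
      show y + 1 + 1 = y + 2 from by omega] using this
  have hB : (x + 2) * (y + 1) + 1 ≤ Nat.choose (x + y + 3) (y + 1) := by
    have := choose_lin_lower (x + 2) (y + 1) (by omega) (by omega)
    rwa [show x + 2 + (y + 1) = x + y + 3 from by omega] at this
  have hidZ : ((x : ℤ) + y + 4) * (Nat.choose (x + y + 3) (y + 1) : ℤ)
      = (Nat.choose (x + y + 4) (y + 2) : ℤ) * ((y : ℤ) + 2) := by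
    exact_mod_cast hid
  have hBZ : ((x : ℤ) + 2) * ((y : ℤ) + 1) + 1
      ≤ (Nat.choose (x + y + 3) (y + 1) : ℤ) := by exact_mod_cast hB
  have hy2pos : (0 : ℤ) < (y : ℤ) + 2 := by positivity
  rw [gt_iff_lt, ← mul_lt_mul_iff_right₀ hy2pos]
  push_cast
  have hxnn : (0 : ℤ) ≤ (x : ℤ) := Int.natCast_nonneg x
  have hynn : (0 : ℤ) ≤ (y : ℤ) := Int.natCast_nonneg y
  nlinarith [mul_nonneg hxnn hynn, mul_nonneg (mul_nonneg hxnn hxnn) hynn,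
    mul_nonneg hxnn (mul_nonneg hynn hynn), mul_nonneg hxnn hxnn,
    mul_nonneg (mul_nonneg hxnn hxnn) hxnn,
    mul_nonneg (sub_nonneg.mpr hBZ)
      (by nlinarith : (0 : ℤ) ≤ ((x : ℤ) + 3) ^ 2 - 2 * ((x : ℤ) + 3) + ((y : ℤ) + 1) + 2)]
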